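/- Suppose 𝒮^inv and 𝒮^res are orthogonal linear subspaces of ℝ^p with 𝒮^inv ⊕ 𝒮^res = ℝ^p such that for all t ∈ ℕ, Π_{𝒮^inv} Σ_t Π_{𝒮^res} = 0, and such that 𝒮^inv is opt-invariant on ℕ with common maximizer β^inv (so Π_{𝒮^inv}γ_t = β^inv for all t). For t ∈ ℕ, β ∈ ℝ^p and γ ∈ ℝ^p write f_t(β, γ) := 2 γᵀΣ_tβ − βᵀΣ_tβ, and define I_t(β) := inf{ f_t(β, γ) : γ ∈ ℝ^p, γ − β^inv ∈ 𝒮^res } ∈ ℝ ∪ {−∞}. Then for every t ∈ ℕ: (a) if β ∉ 𝒮^inv the set { f_t(β, γ) : γ − β^inv ∈ 𝒮^res } is unbounded below; (b) if β ∈ 𝒮^inv then f_t(β, γ) = 2 (β^inv)ᵀΣ_tβ − βᵀΣ_tβ for every admissible γ, so I_t(β) equals this value; and (c) β^inv is the unique maximizer of β ↦ I_t(β): I_t(β^inv) = (β^inv)ᵀΣ_tβ^inv and I_t(β) < I_t(β^inv) for every β ≠ β^inv. -/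

import Mathlib

open Matrix Finset MeasureTheory

noncomputable section

/-- Vectors in `ℝ^p`. -/
abbrev Vec (p : ℕ) : Type := Fin p → ℝ

/-- Real `p × p` matrices. -/
abbrev Mat (p : ℕ) : Type := Matrix (Fin p) (Fin p) ℝ

/-- Explained variance `ΔVar(β) = 2 γᵀ C β − βᵀ C β` at a time with covariance `C`
and true parameter `γ`. -/
def dVar {p : ℕ} (C : Mat p) (γ β : Vec p) : ℝ :=
  2 * (γ ⬝ᵥ (C *ᵥ β)) - β ⬝ᵥ (C *ᵥ β)

/-- `β₀` is the unique maximizer of `f` over the linear subspace whose orthogonal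
projection matrix is `P` (membership in the subspace is expressed as `P *ᵥ β = β`). -/
def IsUMaxOn {p : ℕ} (f : Vec p → ℝ) (P : Mat p) (β₀ : Vec p) : Prop :=
  P *ᵥ β₀ = β₀ ∧ ∀ β : Vec p, P *ᵥ β = β → β ≠ β₀ → f β < f β₀

/-- The matrices `P j` are the orthogonal projection matrices of a family of pairwise
orthogonal nonzero linear subspaces of `ℝ^p` whose direct sum is `ℝ^p`. -/
structure OrthPartition (p q : ℕ) (P : Fin q → Mat p) : Prop where
  symm : ∀ j, (P j)ᵀ = P j
  idem : ∀ j, P j * P j = P j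
  nonzero : ∀ j, P j ≠ 0
  orth : ∀ i j, i ≠ j → P i * P j = 0
  sum_one : ∑ j, P j = 1

/-- The worst-case explained variance
`I_t(β) = inf { f_t(β,γ) : γ − β^inv ∈ 𝒮^res } ∈ ℝ ∪ {−∞}`, as an `EReal`-valued
infimum, where `f_t(β,γ) = 2 γᵀΣ_tβ − βᵀΣ_tβ`. -/
noncomputable def Ifun {p : ℕ} (C : Mat p) (Pres : Mat p) (βinv β : Vec p) : EReal :=
  ⨅ g ∈ {g : Vec p | Pres *ᵥ (g - βinv) = g - βinv}, ((dVar C g β : ℝ) : EReal)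

/-- Theorem 2 of the paper: `β^inv` is worst-case optimal. -/
theorem stmt8 {p : ℕ} (hp : 1 ≤ p)
    (Cov : ℕ → Mat p) (hCov : ∀ t, 1 ≤ t → (Cov t).PosDef)
    (γ0 : ℕ → Vec p)
    (Pinv Pres : Mat p)
    (hsymm₁ : Pinvᵀ = Pinv) (hidem₁ : Pinv * Pinv = Pinv)
    (hsymm₂ : Presᵀ = Pres) (hidem₂ : Pres * Pres = Pres)
    (horth : Pinv * Pres = 0)
    (hsum : Pinv + Pres = 1)
    (hdec : ∀ t, 1 ≤ t → Pinv * Cov t * Pres = 0)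
    (βinv : Vec p)
    (hopt : ∀ t, 1 ≤ t → IsUMaxOn (dVar (Cov t) (γ0 t)) Pinv βinv) :
    ∀ t, 1 ≤ t →
      -- (a) if β ∉ 𝒮^inv the admissible values of f_t(β, ·) are unbounded below
      (∀ β : Vec p, ¬ (Pinv *ᵥ β = β) →
        ¬ BddBelow ((fun g => dVar (Cov t) g β) ''
            {g : Vec p | Pres *ᵥ (g - βinv) = g - βinv})) ∧
      -- (b) if β ∈ 𝒮^inv then f_t(β, γ) is constant in admissible γ, and I_t(β)
      -- equals this value
      (∀ β : Vec p, Pinv *ᵥ β = β →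
        (∀ g : Vec p, Pres *ᵥ (g - βinv) = g - βinv →
          dVar (Cov t) g β
            = 2 * (βinv ⬝ᵥ ((Cov t) *ᵥ β)) - β ⬝ᵥ ((Cov t) *ᵥ β)) ∧
        Ifun (Cov t) Pres βinv β
          = ((2 * (βinv ⬝ᵥ ((Cov t) *ᵥ β)) - β ⬝ᵥ ((Cov t) *ᵥ β) : ℝ) : EReal)) ∧
      -- (c) β^inv is the unique maximizer of I_t
      (Ifun (Cov t) Pres βinv βinv = ((βinv ⬝ᵥ ((Cov t) *ᵥ βinv) : ℝ) : EReal) ∧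
       ∀ β : Vec p, β ≠ βinv →
         Ifun (Cov t) Pres βinv β < Ifun (Cov t) Pres βinv βinv) := by
  intro t ht
  obtain ⟨hβm, _⟩ := hopt t ht
  have hPD := hCov t ht
  have hCsymm : (Cov t)ᵀ = Cov t := by
    have := hPD.1.eq; simpa [Matrix.conjTranspose_eq_transpose_of_trivial] using this
  have hpos : ∀ x : Vec p, x ≠ 0 → 0 < x ⬝ᵥ (Cov t *ᵥ x) := fun x hx => by
    simpa using hPD.dotProduct_mulVec_pos hx
  have hds : ∀ v w : Vec p, v ⬝ᵥ (Cov t *ᵥ w) = w ⬝ᵥ (Cov t *ᵥ v) := fun v w => by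
    rw [Matrix.dotProduct_mulVec, ← Matrix.mulVec_transpose, hCsymm, dotProduct_comm]
  have hresinv : Pres * Cov t * Pinv = 0 := by
    have h := congrArg Matrix.transpose (hdec t ht)
    simpa [Matrix.transpose_mul, hCsymm, hsymm₁, hsymm₂, Matrix.mul_assoc] using h
  -- admissible vectors orthogonal to S^inv w.r.t. Σ
  have horthdot : ∀ r b : Vec p, Pres *ᵥ r = r → Pinv *ᵥ b = b →
      r ⬝ᵥ (Cov t *ᵥ b) = 0 := by
    intro r b hr hb
    have hmv : ∀ (A : Mat p) (v w : Vec p), (A *ᵥ v) ⬝ᵥ w = v ⬝ᵥ (Aᵀ *ᵥ w) := by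
      intro A v w
      rw [Matrix.dotProduct_mulVec, Matrix.vecMul_transpose]
    calc r ⬝ᵥ (Cov t *ᵥ b) = (Pres *ᵥ r) ⬝ᵥ (Cov t *ᵥ (Pinv *ᵥ b)) := by rw [hr, hb]
      _ = r ⬝ᵥ ((Pres * Cov t * Pinv) *ᵥ b) := by
          rw [hmv, hsymm₂]
          simp [Matrix.mulVec_mulVec, Matrix.mul_assoc]
      _ = 0 := by rw [hresinv]; simp
  have hmem0 : Pres *ᵥ (βinv - βinv) = βinv - βinv := by simp
  -- part (b), pointwise
  have hb : ∀ β : Vec p, Pinv *ᵥ β = β → ∀ g : Vec p, Pres *ᵥ (g - βinv) = g - βinv →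
      dVar (Cov t) g β = 2 * (βinv ⬝ᵥ (Cov t *ᵥ β)) - β ⬝ᵥ (Cov t *ᵥ β) := by
    intro β hβ g hg
    have h0 := horthdot (g - βinv) β hg hβ
    rw [sub_dotProduct] at h0
    unfold dVar
    have : g ⬝ᵥ (Cov t *ᵥ β) = βinv ⬝ᵥ (Cov t *ᵥ β) := by linarith
    rw [this]
  -- part (b), infimum
  have hIb : ∀ β : Vec p, Pinv *ᵥ β = β →
      Ifun (Cov t) Pres βinv β
        = ((2 * (βinv ⬝ᵥ (Cov t *ᵥ β)) - β ⬝ᵥ (Cov t *ᵥ β) : ℝ) : EReal) := by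
    intro β hβ
    apply le_antisymm
    · have h := iInf₂_le (f := fun g (_ : Pres *ᵥ (g - βinv) = g - βinv) =>
        ((dVar (Cov t) g β : ℝ) : EReal)) βinv hmem0
      rw [hb β hβ βinv hmem0] at h
      exact h
    · exact le_iInf₂ fun g hg => by rw [hb β hβ g hg]
  -- part (a), pointwise: values go to -∞
  have ha : ∀ β : Vec p, ¬ (Pinv *ᵥ β = β) → ∀ m : ℝ,
      ∃ g : Vec p, Pres *ᵥ (g - βinv) = g - βinv ∧ dVar (Cov t) g β < m := by
    intro β hβ m
    set r : Vec p := Pres *ᵥ β with hrdef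
    have hdecomp : Pinv *ᵥ β + Pres *ᵥ β = β := by
      rw [← Matrix.add_mulVec, hsum, Matrix.one_mulVec]
    have hr0 : r ≠ 0 := by
      intro h0
      apply hβ
      have hd2 := hdecomp
      rw [← hrdef, h0, add_zero] at hd2
      exact hd2
    have hPr : Pres *ᵥ r = r := by
      rw [hrdef, Matrix.mulVec_mulVec, hidem₂]
    have hrr : 0 < r ⬝ᵥ (Cov t *ᵥ r) := hpos r hr0
    have hrβ : r ⬝ᵥ (Cov t *ᵥ β) = r ⬝ᵥ (Cov t *ᵥ r) := by
      have h1 : r ⬝ᵥ (Cov t *ᵥ (Pinv *ᵥ β)) = 0 := by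
        apply horthdot r (Pinv *ᵥ β) hPr
        rw [Matrix.mulVec_mulVec, hidem₁]
      calc r ⬝ᵥ (Cov t *ᵥ β) = r ⬝ᵥ (Cov t *ᵥ (Pinv *ᵥ β + r)) := by rw [hrdef, hdecomp]
        _ = r ⬝ᵥ (Cov t *ᵥ (Pinv *ᵥ β)) + r ⬝ᵥ (Cov t *ᵥ r) := by
            rw [Matrix.mulVec_add, dotProduct_add]
        _ = r ⬝ᵥ (Cov t *ᵥ r) := by rw [h1, zero_add]
    set K : ℝ := 2 * (βinv ⬝ᵥ (Cov t *ᵥ β)) - β ⬝ᵥ (Cov t *ᵥ β) with hK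
    set c : ℝ := (K - m) / (2 * (r ⬝ᵥ (Cov t *ᵥ r))) + 1 with hc
    refine ⟨βinv - c • r, ?_, ?_⟩
    · have hgd : (βinv - c • r) - βinv = -(c • r) := by abel
      rw [hgd, Matrix.mulVec_neg, Matrix.mulVec_smul, hPr]
    · have hval : dVar (Cov t) (βinv - c • r) β = K - 2 * c * (r ⬝ᵥ (Cov t *ᵥ r)) := by
        unfold dVar
        rw [sub_dotProduct, smul_dotProduct, smul_eq_mul, hrβ, hK]
        ring
      rw [hval]
      have h2 : (K - m) / (2 * (r ⬝ᵥ (Cov t *ᵥ r))) * (2 * (r ⬝ᵥ (Cov t *ᵥ r))) = K - m :=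
        div_mul_cancel₀ _ (by positivity)
      have h3 : K - 2 * c * (r ⬝ᵥ (Cov t *ᵥ r)) = m - 2 * (r ⬝ᵥ (Cov t *ᵥ r)) := by
        rw [hc]
        linear_combination -h2
      linarith
  refine ⟨?_, fun β hβ => ⟨hb β hβ, hIb β hβ⟩, ?_, ?_⟩
  · intro β hβ hbdd
    obtain ⟨m, hm⟩ := hbdd
    obtain ⟨g, hg, hlt⟩ := ha β hβ m
    exact absurd (hm ⟨g, hg, rfl⟩) (by simpa using not_le.mpr hlt)
  · rw [hIb βinv hβm]
    exact EReal.coe_eq_coe_iff.mpr (by ring)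
  · intro β hne
    rw [hIb βinv hβm]
    by_cases hβ : Pinv *ᵥ β = β
    · rw [hIb β hβ]
      have hq : 0 < (βinv - β) ⬝ᵥ (Cov t *ᵥ (βinv - β)) :=
        hpos _ (sub_ne_zero.mpr (Ne.symm hne))
      rw [Matrix.mulVec_sub, dotProduct_sub, sub_dotProduct, sub_dotProduct] at hq
      have hsym := hds β βinv
      exact EReal.coe_lt_coe_iff.mpr (by linarith)
    · obtain ⟨g, hg, hlt⟩ := ha β hβ
        (2 * (βinv ⬝ᵥ (Cov t *ᵥ βinv)) - βinv ⬝ᵥ (Cov t *ᵥ βinv))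
      have h1 : Ifun (Cov t) Pres βinv β ≤ ((dVar (Cov t) g β : ℝ) : EReal) :=
        iInf₂_le (f := fun g' (_ : Pres *ᵥ (g' - βinv) = g' - βinv) =>
          ((dVar (Cov t) g' β : ℝ) : EReal)) g hg
      exact lt_of_le_of_lt h1 (EReal.coe_lt_coe_iff.mpr hlt)
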